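/- arXiv:1605.01860 — 2 statements merged into one kernel-verified Lean document; each statement's English description precedes it below -/
import Mathlib

section
/- Let φ be the convex piecewise linear function on M_ℝ = ℝⁿ given by the lower convex hull of {(m, φ̄(m)) : m ∈ ℤⁿ}, φ̄(y) = (1/2)yᵀZy, Z positive definite symmetric with integer entries. For m, m′ ∈ ℤⁿ, the subdifferentials satisfy ∂φ(m) = ∂φ(m′) + Z(m − m′, ·): translation by the linear functional Z(m−m′, ·) maps ∂φ(m′) bijectively onto ∂φ(m). Consequently Vol(∂φ(m)) is independent of m ∈ ℤⁿ. -/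
open Matrix MeasureTheory

/-- The subdifferential of `f` at `y₀`. -/
def subdiff (n : ℕ) (f : (Fin n → ℝ) → ℝ) (y₀ : Fin n → ℝ) : Set (Fin n → ℝ) :=
  {v | ∀ y : Fin n → ℝ, v ⬝ᵥ (y - y₀) + f y₀ ≤ f y}

lemma key_mem (n : ℕ) (Z : Matrix (Fin n) (Fin n) ℝ) (hsymm : Z.IsSymm)
    (φ : (Fin n → ℝ) → ℝ)
    (hper : ∀ (y : Fin n → ℝ) (γ : Fin n → ℤ),
      φ (y + fun i => (γ i : ℝ)) =
        φ y + ((fun i => (γ i : ℝ)) ⬝ᵥ Z.mulVec y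
          + (fun i => (γ i : ℝ)) ⬝ᵥ Z.mulVec (fun i => (γ i : ℝ)) / 2))
    (m m' : Fin n → ℤ) (v : Fin n → ℝ)
    (hv : v ∈ subdiff n φ (fun i => (m' i : ℝ))) :
    v + Z.mulVec (fun i => ((m i - m' i : ℤ) : ℝ)) ∈ subdiff n φ (fun i => (m i : ℝ)) := by
  have hsym : ∀ x w : Fin n → ℝ, (Z.mulVec w) ⬝ᵥ x = w ⬝ᵥ Z.mulVec x := by
    intro x w
    rw [dotProduct_comm, dotProduct_mulVec, ← Matrix.mulVec_transpose, hsymm,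
      dotProduct_comm]
  set γ : Fin n → ℤ := m - m' with hγ
  set cγ : Fin n → ℝ := fun i => (γ i : ℝ) with hcγ
  have hcast : (fun i => ((m i - m' i : ℤ) : ℝ)) = cγ := by
    funext i; simp [hcγ, hγ]
  have hab : (fun i => (m i : ℝ)) = (fun i => (m' i : ℝ)) + cγ := by
    funext i; simp [hcγ, hγ]
  rw [hcast]
  intro y
  set b : Fin n → ℝ := fun i => (m' i : ℝ)
  set y' : Fin n → ℝ := y - cγ with hy'
  have hy : y = y' + cγ := by simp [hy']
  have h1 : φ y = φ y' + (cγ ⬝ᵥ Z.mulVec y' + cγ ⬝ᵥ Z.mulVec cγ / 2) := by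
    rw [hy]; exact hper y' γ
  have h2 : φ (fun i => (m i : ℝ)) = φ b + (cγ ⬝ᵥ Z.mulVec b + cγ ⬝ᵥ Z.mulVec cγ / 2) := by
    rw [hab]; exact hper b γ
  have hdiff : y - (fun i => (m i : ℝ)) = y' - b := by
    rw [hab, hy']; abel
  have hdot : (v + Z.mulVec cγ) ⬝ᵥ (y - fun i => (m i : ℝ))
      = v ⬝ᵥ (y' - b) + (cγ ⬝ᵥ Z.mulVec y' - cγ ⬝ᵥ Z.mulVec b) := by
    rw [hdiff, add_dotProduct, hsym, ← dotProduct_sub, Matrix.mulVec_sub, dotProduct_sub]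
  have hvb := hv y'
  rw [h1, h2, hdot]
  linarith

/-- for `φ` convex with the quasi-periodicity
`φ(y+γ) = φ(y) + Z(γ,y) + Z(γ,γ)/2` (e.g. the lower convex hull of the lattice points on the
graph of `φ̄(y) = yᵀZy/2`, `Z` positive definite symmetric integral), the subdifferentials at
lattice points satisfy `∂φ(m) = ∂φ(m') + Z(m-m',·)`, and hence `Vol(∂φ(m))` is independent
of `m ∈ ℤⁿ`. -/
theorem stmt_12 (n : ℕ) (Z : Matrix (Fin n) (Fin n) ℝ)
    (hsymm : Z.IsSymm) (hpos : Z.PosDef)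
    (hint : ∀ i j, ∃ z : ℤ, Z i j = (z : ℝ))
    (φ : (Fin n → ℝ) → ℝ) (hconv : ConvexOn ℝ Set.univ φ)
    (hper : ∀ (y : Fin n → ℝ) (γ : Fin n → ℤ),
      φ (y + fun i => (γ i : ℝ)) =
        φ y + ((fun i => (γ i : ℝ)) ⬝ᵥ Z.mulVec y
          + (fun i => (γ i : ℝ)) ⬝ᵥ Z.mulVec (fun i => (γ i : ℝ)) / 2)) :
    ∀ m m' : Fin n → ℤ,
      subdiff n φ (fun i => (m i : ℝ))
        = (fun v => v + Z.mulVec (fun i => ((m i - m' i : ℤ) : ℝ))) ''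
            subdiff n φ (fun i => (m' i : ℝ))
      ∧ volume (subdiff n φ (fun i => (m i : ℝ)))
          = volume (subdiff n φ (fun i => (m' i : ℝ))) := by
  intro m m'
  have hcast : (fun i => ((m' i - m i : ℤ) : ℝ))
      = -(fun i => ((m i - m' i : ℤ) : ℝ)) := by
    funext i; simp only [Pi.neg_apply]; push_cast; ring
  have hset : subdiff n φ (fun i => (m i : ℝ))
      = (fun v => v + Z.mulVec (fun i => ((m i - m' i : ℤ) : ℝ))) ''
          subdiff n φ (fun i => (m' i : ℝ)) := by
    ext w
    constructor
    · intro hw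
      refine ⟨w + Z.mulVec (fun i => ((m' i - m i : ℤ) : ℝ)),
        key_mem n Z hsymm φ hper m' m w hw, ?_⟩
      rw [hcast, Matrix.mulVec_neg]; exact neg_add_cancel_right w _
    · rintro ⟨v, hv, rfl⟩
      exact key_mem n Z hsymm φ hper m m' v hv
  refine ⟨hset, ?_⟩
  rw [hset]
  have himg : (fun v => v + Z.mulVec (fun i => ((m i - m' i : ℤ) : ℝ))) ''
      subdiff n φ (fun i => (m' i : ℝ))
      = (fun v => v + -(Z.mulVec (fun i => ((m i - m' i : ℤ) : ℝ)))) ⁻¹'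
          subdiff n φ (fun i => (m' i : ℝ)) := by
    rw [← Set.image_add_right]
  rw [himg]
  exact measure_preimage_add_right volume _ _
end

section
/- With φ as above (lower convex hull of {(m, (1/2)mᵀZm)}) and k a positive integer, the common volume V = Vol(∂φ(m)) of the subdifferential at each lattice point satisfies kⁿ·V = Vol(D), where D is a fundamental domain for the lattice {Z(γ,·) : γ ∈ kℤⁿ} in (ℝⁿ)*, and Vol(D) = kⁿ det(Z). Hence V = det(Z), and MA(φ) = det(Z) Σ_{m ∈ ℤⁿ} δ_m. -/
open Matrix MeasureTheory
open scoped ENNReal Pointwise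

/-- The fundamental parallelepiped `D` for the lattice generated by `kZe₁,…,kZeₙ`. -/
def fundDom (n k : ℕ) (Z : Matrix (Fin n) (Fin n) ℝ) : Set (Fin n → ℝ) :=
  (fun t : Fin n → ℝ => ∑ i, t i • ((k : ℝ) • Z.mulVec (Pi.single i 1))) ''
    Set.univ.pi fun _ => Set.Icc (0 : ℝ) 1

namespace Stmt13Aux

variable {n : ℕ}

/-- real coercion of an integer vector -/
def cz (m : Fin n → ℤ) : Fin n → ℝ := fun i => (m i : ℝ)

lemma cz_add (a b : Fin n → ℤ) : cz (a + b) = cz a + cz b := by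
  funext i; simp [cz]

lemma cz_neg (a : Fin n → ℤ) : cz (-a) = - cz a := by funext i; simp [cz]

lemma cz_inj : Function.Injective (cz (n := n)) := by
  intro a b h
  funext i
  have : (a i : ℝ) = (b i : ℝ) := congrFun h i
  exact_mod_cast this

lemma cz_ne_zero {a : Fin n → ℤ} (h : a ≠ 0) : cz a ≠ 0 := by
  intro h0
  apply h
  apply cz_inj
  rw [h0]; funext i; simp [cz]

variable (Z : Matrix (Fin n) (Fin n) ℝ)

/-- the quadratic form -/
def q (x : Fin n → ℝ) : ℝ := x ⬝ᵥ Z.mulVec x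

lemma dot_symm (hsymm : Z.IsSymm) (a b : Fin n → ℝ) :
    a ⬝ᵥ Z.mulVec b = b ⬝ᵥ Z.mulVec a := by
  rw [Matrix.dotProduct_mulVec, ← Matrix.mulVec_transpose, hsymm.eq, dotProduct_comm]

lemma q_add (hsymm : Z.IsSymm) (a b : Fin n → ℝ) :
    q Z (a + b) = q Z a + 2 * (Z.mulVec a ⬝ᵥ b) + q Z b := by
  have h : a ⬝ᵥ Z.mulVec b = Z.mulVec a ⬝ᵥ b := by
    rw [dot_symm Z hsymm a b, dotProduct_comm]
  simp only [q, Matrix.mulVec_add, dotProduct_add, add_dotProduct]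
  have h2 : b ⬝ᵥ Z.mulVec a = Z.mulVec a ⬝ᵥ b := dotProduct_comm _ _
  rw [h, h2]
  ring

/-- The candidate tile: subdifferential at 0. -/
def P : Set (Fin n → ℝ) := {w | ∀ γ : Fin n → ℤ, w ⬝ᵥ cz γ ≤ q Z (cz γ) / 2}

lemma P_convex : Convex ℝ (P Z) := by
  have : P Z = ⋂ γ : Fin n → ℤ, {w | w ⬝ᵥ cz γ ≤ q Z (cz γ) / 2} := by
    ext w; simp [P, Set.mem_iInter]
  rw [this]
  refine convex_iInter fun γ => ?_
  intro x hx y hy a b ha hb hab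
  simp only [Set.mem_setOf_eq] at hx hy ⊢
  have : (a • x + b • y) ⬝ᵥ cz γ = a * (x ⬝ᵥ cz γ) + b * (y ⬝ᵥ cz γ) := by
    simp [add_dotProduct, smul_dotProduct, smul_eq_mul]
  rw [this]
  calc a * (x ⬝ᵥ cz γ) + b * (y ⬝ᵥ cz γ)
      ≤ a * (q Z (cz γ) / 2) + b * (q Z (cz γ) / 2) :=
        add_le_add (mul_le_mul_of_nonneg_left hx ha) (mul_le_mul_of_nonneg_left hy hb)
    _ = q Z (cz γ) / 2 := by rw [← add_mul, hab, one_mul]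

lemma P_closed : IsClosed (P Z) := by
  have : P Z = ⋂ γ : Fin n → ℤ, {w | w ⬝ᵥ cz γ ≤ q Z (cz γ) / 2} := by
    ext w; simp [P, Set.mem_iInter]
  rw [this]
  refine isClosed_iInter fun γ => ?_
  have hc : Continuous fun w : Fin n → ℝ => w ⬝ᵥ cz γ := by
    simp only [dotProduct]
    exact continuous_finset_sum _ fun i _ => (continuous_apply i).mul continuous_const
  exact isClosed_le hc continuous_const

section phi

variable (φ : (Fin n → ℝ) → ℝ)
variable (hφ : ∀ y : Fin n → ℝ, IsLUB
      {r : ℝ | ∃ (v : Fin n → ℝ) (c : ℝ),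
        (∀ m : Fin n → ℤ, v ⬝ᵥ (fun i => (m i : ℝ)) + c ≤
          (fun i => (m i : ℝ)) ⬝ᵥ Z.mulVec (fun i => (m i : ℝ)) / 2)
        ∧ r = v ⬝ᵥ y + c} (φ y))

/-- key algebraic inequality rearrangement -/
lemma key_ineq (hsymm : Z.IsSymm) (m γ : Fin n → ℤ) (w : Fin n → ℝ) (hw : w ⬝ᵥ cz γ ≤ q Z (cz γ) / 2) :
    (Z.mulVec (cz m) + w) ⬝ᵥ cz (m + γ) + (q Z (cz m) / 2 - (Z.mulVec (cz m) + w) ⬝ᵥ cz m)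
      ≤ q Z (cz (m + γ)) / 2 := by
  rw [cz_add, q_add Z hsymm]
  simp only [dotProduct_add, add_dotProduct]
  nlinarith [hw]

include hφ in
lemma phi_lattice (hsymm : Z.IsSymm) (hpos : Z.PosDef) (m : Fin n → ℤ) : φ (cz m) = q Z (cz m) / 2 := by
  have h := hφ (cz m)
  apply le_antisymm
  · apply h.2
    intro r hr
    obtain ⟨v, c, hvc, rfl⟩ := hr
    exact hvc m
  · apply h.1
    refine ⟨Z.mulVec (cz m), q Z (cz m) / 2 - Z.mulVec (cz m) ⬝ᵥ cz m, ?_, by ring⟩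
    intro m'
    have h0 : (0 : Fin n → ℝ) ⬝ᵥ cz (m' - m) ≤ q Z (cz (m' - m)) / 2 := by
      rw [zero_dotProduct]
      have hpos' : 0 ≤ q Z (cz (m' - m)) := by
        have := hpos.posSemidef.dotProduct_mulVec_nonneg (cz (m' - m))
        simpa [q] using this
      linarith
    have := key_ineq Z hsymm m (m' - m) 0 h0
    simp only [add_zero, add_sub_cancel] at this
    exact this

include hφ in
lemma subdiff_eq (hsymm : Z.IsSymm) (hpos : Z.PosDef) (m : Fin n → ℤ) :
    subdiff n φ (cz m) = {v | v - Z.mulVec (cz m) ∈ P Z} := by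
  have hm := phi_lattice Z φ hφ hsymm hpos m
  ext v
  constructor
  · intro hv γ
    have h1 := hv (cz (m + γ))
    have hm' := phi_lattice Z φ hφ hsymm hpos (m + γ)
    rw [hm, hm', cz_add] at h1
    have h2 : v ⬝ᵥ (cz m + cz γ - cz m) = v ⬝ᵥ cz γ := by
      rw [add_sub_cancel_left]
    rw [h2] at h1
    have hexp : q Z (cz m + cz γ) = q Z (cz m) + 2 * (Z.mulVec (cz m) ⬝ᵥ cz γ) + q Z (cz γ) :=
      q_add Z hsymm (cz m) (cz γ)
    rw [hexp] at h1
    have h3 : (v - Z.mulVec (cz m)) ⬝ᵥ cz γ = v ⬝ᵥ cz γ - Z.mulVec (cz m) ⬝ᵥ cz γ :=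
      sub_dotProduct _ _ _
    rw [h3]
    linarith
  · intro hw y
    set w := v - Z.mulVec (cz m) with hwdef
    have hv : Z.mulVec (cz m) + w = v := by rw [hwdef, add_sub_cancel]
    have hmem : v ⬝ᵥ y + (q Z (cz m) / 2 - v ⬝ᵥ cz m) ≤ φ y := by
      apply (hφ y).1
      refine ⟨v, q Z (cz m) / 2 - v ⬝ᵥ cz m, fun m' => ?_, rfl⟩
      have := key_ineq Z hsymm m (m' - m) w (hw (m' - m))
      rw [hv] at this
      have hmm : m + (m' - m) = m' := by ring
      rw [hmm] at this
      exact this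
    have h4 : v ⬝ᵥ (y - cz m) = v ⬝ᵥ y - v ⬝ᵥ cz m := dotProduct_sub _ _ _
    rw [hm, h4]
    linarith

end phi

lemma q_smul (t : ℝ) (x : Fin n → ℝ) : q Z (t • x) = t ^ 2 * q Z x := by
  simp only [q, Matrix.mulVec_smul, smul_dotProduct, dotProduct_smul,
    smul_eq_mul]
  ring

lemma q_continuous : Continuous (q Z) := by
  have hq : q Z = fun x => ∑ i, x i * ∑ j, Z i j * x j := by
    funext x; simp [q, Matrix.mulVec, dotProduct]
  rw [hq]
  exact continuous_finset_sum _ fun i _ => (continuous_apply i).mul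
    (continuous_finset_sum _ fun j _ => continuous_const.mul (continuous_apply j))

lemma coercive (hpos : Z.PosDef) : ∃ c : ℝ, 0 < c ∧ ∀ x : Fin n → ℝ, c * ‖x‖ ^ 2 ≤ q Z x := by
  rcases Nat.eq_zero_or_pos n with hn | hn
  · refine ⟨1, one_pos, fun x => ?_⟩
    subst hn
    have hx0 : ‖x‖ = 0 := norm_eq_zero.mpr (Subsingleton.elim x 0)
    have hq0 : q Z x = 0 := by rw [Subsingleton.elim x 0]; simp [q]
    rw [hx0, hq0]; norm_num
  · have hne : Nonempty (Fin n) := ⟨⟨0, hn⟩⟩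
    have hnt : Nontrivial (Fin n → ℝ) := inferInstance
    have hsne : (Metric.sphere (0 : Fin n → ℝ) 1).Nonempty :=
      NormedSpace.sphere_nonempty.mpr zero_le_one
    obtain ⟨x₀, hx₀S, hmin⟩ := (isCompact_sphere (0 : Fin n → ℝ) 1).exists_isMinOn hsne
      (q_continuous Z).continuousOn
    have hx₀norm : ‖x₀‖ = 1 := by simpa using hx₀S
    have hx₀ne : x₀ ≠ 0 := by
      intro h; rw [h] at hx₀norm; simp at hx₀norm
    have hc : 0 < q Z x₀ := by
      have := hpos.dotProduct_mulVec_pos hx₀ne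
      simpa [q] using this
    refine ⟨q Z x₀, hc, fun x => ?_⟩
    rcases eq_or_ne x 0 with rfl | hx
    · simp [q]
    · have hnorm : 0 < ‖x‖ := norm_pos_iff.mpr hx
      set u := ‖x‖⁻¹ • x with hu
      have hunorm : ‖u‖ = 1 := by
        rw [hu, norm_smul, norm_inv, norm_norm, inv_mul_cancel₀ hnorm.ne']
      have hxu : x = ‖x‖ • u := by
        rw [hu, smul_smul, mul_inv_cancel₀ hnorm.ne', one_smul]
      have hqu : q Z x₀ ≤ q Z u := hmin (by simpa using hunorm)
      have hqx : q Z x = ‖x‖ ^ 2 * q Z u := by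
        conv_lhs => rw [hxu]
        rw [q_smul]
      nlinarith [mul_le_mul_of_nonneg_right hqu (sq_nonneg ‖x‖)]

lemma dot_le (v w : Fin n → ℝ) : v ⬝ᵥ w ≤ (∑ i, |v i|) * ‖w‖ := by
  calc v ⬝ᵥ w = ∑ i, v i * w i := rfl
    _ ≤ ∑ i, |v i| * ‖w‖ := by
        refine Finset.sum_le_sum fun i _ => ?_
        calc v i * w i ≤ |v i * w i| := le_abs_self _
          _ = |v i| * |w i| := abs_mul _ _
          _ ≤ |v i| * ‖w‖ := by
              have := norm_le_pi_norm w i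
              have h2 : |w i| ≤ ‖w‖ := by simpa [Real.norm_eq_abs] using this
              exact mul_le_mul_of_nonneg_left h2 (abs_nonneg _)
    _ = (∑ i, |v i|) * ‖w‖ := by rw [Finset.sum_mul]

lemma exists_tile (hsymm : Z.IsSymm) (hpos : Z.PosDef) (v : Fin n → ℝ) :
    ∃ γ : Fin n → ℤ, v - Z.mulVec (cz γ) ∈ P Z := by
  obtain ⟨c, hc, hcoer⟩ := coercive Z hpos
  set f : (Fin n → ℤ) → ℝ := fun γ => q Z (cz γ) / 2 - v ⬝ᵥ cz γ with hf
  set B : ℝ := ∑ i, |v i| with hB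
  have hBnn : 0 ≤ B := Finset.sum_nonneg fun i _ => abs_nonneg _
  set R : ℝ := 2 * B / c with hR
  have hRnn : 0 ≤ R := by positivity
  have hS : {γ : Fin n → ℤ | f γ ≤ 0} ⊆
      Set.pi Set.univ (fun _ => Set.Icc (-⌈R⌉) ⌈R⌉) := by
    intro γ hγ
    have hle : q Z (cz γ) / 2 ≤ v ⬝ᵥ cz γ := by
      have := hγ; simp only [hf, Set.mem_setOf_eq] at this; linarith
    have hnrm : ‖cz γ‖ ≤ R := by
      have h1 : c * ‖cz γ‖ ^ 2 ≤ q Z (cz γ) := hcoer (cz γ)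
      have h2 : v ⬝ᵥ cz γ ≤ B * ‖cz γ‖ := dot_le v (cz γ)
      rcases le_or_gt ‖cz γ‖ 0 with h | h
      · exact le_trans h hRnn
      · rw [hR, le_div_iff₀ hc]
        nlinarith [h1, h2, hle, mul_pos hc h]
    intro i _
    have h3 : |(γ i : ℝ)| ≤ R := by
      have := norm_le_pi_norm (cz γ) i
      simp only [cz, Real.norm_eq_abs] at this
      exact le_trans this hnrm
    have h4 : |(γ i : ℝ)| ≤ (⌈R⌉ : ℝ) := le_trans h3 (Int.le_ceil R)
    rw [abs_le] at h4
    constructor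
    · exact_mod_cast h4.1
    · exact_mod_cast h4.2
  have hfin : {γ : Fin n → ℤ | f γ ≤ 0}.Finite :=
    Set.Finite.subset (Set.Finite.pi (fun _ => Set.finite_Icc _ _)) hS
  have h0 : (0 : Fin n → ℤ) ∈ {γ : Fin n → ℤ | f γ ≤ 0} := by
    simp only [Set.mem_setOf_eq, hf]
    have : cz (0 : Fin n → ℤ) = 0 := by funext i; simp [cz]
    rw [this]
    simp [q]
  obtain ⟨γ₀, hγ₀S, hγ₀min⟩ := Set.exists_min_image _ f hfin ⟨0, h0⟩
  have hglobal : ∀ γ, f γ₀ ≤ f γ := by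
    intro γ
    rcases le_or_gt (f γ) 0 with h | h
    · exact hγ₀min γ h
    · have : f γ₀ ≤ 0 := hγ₀S
      linarith
  refine ⟨γ₀, fun δ => ?_⟩
  have hkey := hglobal (γ₀ + δ)
  simp only [hf, cz_add, q_add Z hsymm, dotProduct_add] at hkey
  have hsub : (v - Z.mulVec (cz γ₀)) ⬝ᵥ cz δ
      = v ⬝ᵥ cz δ - Z.mulVec (cz γ₀) ⬝ᵥ cz δ := sub_dotProduct _ _ _
  rw [hsub]
  linarith

lemma q_neg (d : Fin n → ℝ) : q Z (-d) = q Z d := by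
  simp [q, Matrix.mulVec_neg, dotProduct_neg, neg_dotProduct]

/-- overlap of distinct tiles lies in a hyperplane -/
lemma overlap_subset (hsymm : Z.IsSymm) (γ γ' : Fin n → ℤ) :
    {v : Fin n → ℝ | v - Z.mulVec (cz γ) ∈ P Z} ∩ {v | v - Z.mulVec (cz γ') ∈ P Z} ⊆
      {v : Fin n → ℝ | v ⬝ᵥ cz (γ' - γ)
        = Z.mulVec (cz γ) ⬝ᵥ cz (γ' - γ) + q Z (cz (γ' - γ)) / 2} := by
  rintro v ⟨h1, h2⟩
  set d : Fin n → ℝ := cz (γ' - γ) with hd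
  have hd' : cz (γ - γ') = -d := by rw [hd, ← cz_neg]; congr 1; ring
  have ha := h1 (γ' - γ)
  have hb := h2 (γ - γ')
  rw [hd'] at hb
  rw [q_neg] at hb
  have hz : Z.mulVec (cz γ') = Z.mulVec (cz γ) + Z.mulVec d := by
    rw [hd, ← Matrix.mulVec_add]
    congr 1
    rw [← cz_add]
    congr 1
    ring
  have hq : Z.mulVec d ⬝ᵥ d = q Z d := by
    rw [q, dotProduct_comm]
  have ha' : v ⬝ᵥ d - Z.mulVec (cz γ) ⬝ᵥ d ≤ q Z d / 2 := by
    have := sub_dotProduct v (Z.mulVec (cz γ)) d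
    rw [← hd] at ha
    rw [this] at ha
    exact ha
  have hb' : -(v ⬝ᵥ d) + Z.mulVec (cz γ) ⬝ᵥ d + q Z d ≤ q Z d / 2 := by
    have e1 : (v - Z.mulVec (cz γ')) ⬝ᵥ (-d)
        = -(v ⬝ᵥ d) + Z.mulVec (cz γ) ⬝ᵥ d + Z.mulVec d ⬝ᵥ d := by
      rw [sub_dotProduct, hz, add_dotProduct]
      simp only [dotProduct_neg]
      ring
    rw [e1, hq] at hb
    exact hb
  have : v ⬝ᵥ d = Z.mulVec (cz γ) ⬝ᵥ d + q Z d / 2 := by linarith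
  simpa [← hd] using this

/-- hyperplanes are null -/
lemma hyperplane_null (a : Fin n → ℝ) (ha : a ≠ 0) (c : ℝ) :
    volume {x : Fin n → ℝ | x ⬝ᵥ a = c} = 0 := by
  set l : (Fin n → ℝ) →ₗ[ℝ] ℝ :=
    { toFun := fun x => x ⬝ᵥ a
      map_add' := fun x y => add_dotProduct x y a
      map_smul' := fun t x => smul_dotProduct t x a } with hl
  have haa : (0 : ℝ) < a ⬝ᵥ a := by
    have h1 : a ⬝ᵥ a ≠ 0 := fun h => ha (dotProduct_self_eq_zero.mp h)
    have h2 : 0 ≤ a ⬝ᵥ a := Finset.sum_nonneg fun i _ => mul_self_nonneg _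
    exact lt_of_le_of_ne h2 (Ne.symm h1)
  have hker : LinearMap.ker l ≠ ⊤ := by
    intro h
    have : l a = 0 := by
      have : a ∈ LinearMap.ker l := by rw [h]; trivial
      exact this
    rw [hl] at this
    simp only [LinearMap.coe_mk, AddHom.coe_mk] at this
    exact haa.ne' this
  set x₀ : Fin n → ℝ := (c / (a ⬝ᵥ a)) • a with hx₀
  have hlx₀ : l x₀ = c := by
    rw [hl]
    simp only [LinearMap.coe_mk, AddHom.coe_mk, hx₀, smul_dotProduct, smul_eq_mul]
    field_simp
  have hset : {x : Fin n → ℝ | x ⬝ᵥ a = c} = x₀ +ᵥ (LinearMap.ker l : Set (Fin n → ℝ)) := by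
    ext x
    rw [Set.mem_vadd_set_iff_neg_vadd_mem]
    simp only [Set.mem_setOf_eq, vadd_eq_add, SetLike.mem_coe, LinearMap.mem_ker, map_add,
      map_neg, hlx₀]
    constructor
    · intro h
      have : l x = c := h
      rw [this]; ring
    · intro h
      have : l x = c := by linarith
      exact this
  rw [hset, measure_vadd]
  exact Measure.addHaar_submodule volume _ hker

section vol

lemma mulVec_sum_single (x : Fin n → ℝ) :
    Z.mulVec x = ∑ i, x i • Z.mulVec (Pi.single i 1) := by
  funext j
  rw [Finset.sum_apply]
  simp only [Pi.smul_apply, smul_eq_mul]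
  have h1 : ∀ i, Z.mulVec (Pi.single i 1) j = Z j i := by
    intro i
    simp [Matrix.mulVec, dotProduct, Pi.single_apply]
  simp only [h1]
  simp [Matrix.mulVec, dotProduct, mul_comm]

noncomputable def bas (hpos : Z.PosDef) : Module.Basis (Fin n) ℝ (Fin n → ℝ) :=
  (Pi.basisFun ℝ (Fin n)).map
    (Z.toLinearEquiv' (Z.invertibleOfIsUnitDet (isUnit_iff_ne_zero.mpr hpos.det_pos.ne')))

lemma bas_apply (hpos : Z.PosDef) (i : Fin n) :
    bas Z hpos i = Z.mulVec (Pi.single i 1) := by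
  simp only [bas, Module.Basis.map_apply, Pi.basisFun_apply]
  rfl

lemma mem_span_iff (hpos : Z.PosDef) (x : Fin n → ℝ) :
    x ∈ Submodule.span ℤ (Set.range (bas Z hpos)) ↔
      ∃ γ : Fin n → ℤ, Z.mulVec (cz γ) = x := by
  rw [Finsupp.mem_span_range_iff_exists_finsupp]
  constructor
  · rintro ⟨c, hc⟩
    refine ⟨fun i => c i, ?_⟩
    rw [← hc]
    rw [Finsupp.sum_fintype _ _ (fun i => by simp)]
    rw [mulVec_sum_single]
    refine Finset.sum_congr rfl fun i _ => ?_
    rw [bas_apply]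
    rw [show (cz fun i => c i) i = ((c i : ℝ)) from rfl]
    rw [← Int.cast_smul_eq_zsmul ℝ]
  · rintro ⟨γ, hγ⟩
    refine ⟨Finsupp.equivFunOnFinite.symm γ, ?_⟩
    rw [Finsupp.sum_fintype _ _ (fun i => by simp), ← hγ, mulVec_sum_single]
    refine Finset.sum_congr rfl fun i _ => ?_
    rw [bas_apply]
    rw [show (cz γ) i = ((γ i : ℝ)) from rfl]
    rw [show (Finsupp.equivFunOnFinite.symm γ) i = γ i from rfl]
    rw [← Int.cast_smul_eq_zsmul ℝ]

lemma isFund_P (hsymm : Z.IsSymm) (hpos : Z.PosDef) :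
    IsAddFundamentalDomain (Submodule.span ℤ (Set.range (bas Z hpos))) (P Z) volume := by
  constructor
  · exact (P_closed Z).measurableSet.nullMeasurableSet
  · refine Filter.Eventually.of_forall fun x => ?_
    obtain ⟨γ, hγ⟩ := exists_tile Z hsymm hpos x
    refine ⟨⟨-Z.mulVec (cz γ), ?_⟩, ?_⟩
    · refine neg_mem ?_
      exact (mem_span_iff Z hpos _).mpr ⟨γ, rfl⟩
    · show -Z.mulVec (cz γ) +ᵥ x ∈ P Z
      rw [vadd_eq_add, neg_add_eq_sub]
      exact hγ
  · intro g g' hgg'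
    obtain ⟨γ, hγ⟩ := (mem_span_iff Z hpos _).mp g.2
    obtain ⟨γ', hγ'⟩ := (mem_span_iff Z hpos _).mp g'.2
    have hvadd : ∀ (h : Submodule.span ℤ (Set.range (bas Z hpos))) (δ : Fin n → ℤ),
        Z.mulVec (cz δ) = (h : Fin n → ℝ) →
        ((h +ᵥ P Z : Set (Fin n → ℝ)) = {v | v - Z.mulVec (cz δ) ∈ P Z}) := by
      intro h δ hδ
      ext v
      rw [Set.mem_vadd_set_iff_neg_vadd_mem]
      show -(h : Fin n → ℝ) + v ∈ P Z ↔ _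
      rw [neg_add_eq_sub, hδ]
      rfl
    have hne : γ ≠ γ' := by
      intro h
      apply hgg'
      apply Subtype.ext
      rw [← hγ, ← hγ', h]
    show AEDisjoint volume (g +ᵥ P Z) (g' +ᵥ P Z)
    rw [AEDisjoint, hvadd g γ hγ, hvadd g' γ' hγ']
    refine measure_mono_null (overlap_subset Z hsymm γ γ') ?_
    exact hyperplane_null _ (cz_ne_zero (sub_ne_zero_of_ne (Ne.symm hne))) _

lemma matrix_of_bas (hpos : Z.PosDef) : Matrix.of (bas Z hpos) = Zᵀ := by
  ext i j
  rw [Matrix.of_apply]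
  show bas Z hpos i j = Z j i
  rw [bas_apply]
  simp [Matrix.mulVec, dotProduct, Pi.single_apply]

lemma volume_P (hsymm : Z.IsSymm) (hpos : Z.PosDef) :
    volume (P Z) = ENNReal.ofReal Z.det := by
  classical
  have hmv : MeasurableVAdd (Submodule.span ℤ (Set.range (bas Z hpos))) (Fin n → ℝ) :=
    (inferInstance : MeasurableVAdd (Submodule.span ℤ (Set.range (bas Z hpos))).toAddSubgroup
      (Fin n → ℝ))
  have hvi : VAddInvariantMeasure (Submodule.span ℤ (Set.range (bas Z hpos))) (Fin n → ℝ)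
      volume :=
    (inferInstance : VAddInvariantMeasure
      (Submodule.span ℤ (Set.range (bas Z hpos))).toAddSubgroup (Fin n → ℝ) volume)
  have h1 := (isFund_P Z hsymm hpos).measure_eq
    (ZSpan.isAddFundamentalDomain (bas Z hpos) volume)
  rw [h1, ZSpan.volume_fundamentalDomain, matrix_of_bas, Matrix.det_transpose,
    abs_of_pos hpos.det_pos]

end vol

section assemble

lemma tile_eq_vadd (c : Fin n → ℝ) :
    {v : Fin n → ℝ | v - c ∈ P Z} = c +ᵥ P Z := by
  ext v
  rw [Set.mem_vadd_set_iff_neg_vadd_mem]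
  show _ ↔ -c + v ∈ P Z
  rw [neg_add_eq_sub]
  rfl

lemma volume_tile (hsymm : Z.IsSymm) (hpos : Z.PosDef) (c : Fin n → ℝ) :
    volume {v : Fin n → ℝ | v - c ∈ P Z} = ENNReal.ofReal Z.det := by
  rw [tile_eq_vadd, measure_vadd, volume_P Z hsymm hpos]

lemma tile_closed (c : Fin n → ℝ) : IsClosed {v : Fin n → ℝ | v - c ∈ P Z} :=
  (P_closed Z).preimage (continuous_id.sub continuous_const)

lemma tile_convex (c : Fin n → ℝ) : Convex ℝ {v : Fin n → ℝ | v - c ∈ P Z} := by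
  intro x hx y hy a b ha hb hab
  have h : (a • x + b • y) - c = a • (x - c) + b • (y - c) := by
    have h2 : a • (x - c) + b • (y - c) = a • x + b • y - (a + b) • c := by
      rw [add_smul, smul_sub, smul_sub]; abel
    rw [h2, hab, one_smul]
  show (a • x + b • y) - c ∈ P Z
  rw [h]
  exact P_convex Z hx hy ha hb hab

end assemble

section more

variable (Z : Matrix (Fin n) (Fin n) ℝ)

lemma interior_unique (φ : (Fin n → ℝ) → ℝ) {y v : Fin n → ℝ} (m : Fin n → ℤ)
    (hv : v ∈ subdiff n φ y)
    (hint : v ∈ interior (subdiff n φ (cz m))) : y = cz m := by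
  by_contra hne
  set d : Fin n → ℝ := y - cz m with hd
  have hdne : d ≠ 0 := sub_ne_zero_of_ne hne
  have hdd : 0 < d ⬝ᵥ d := by
    have h1 : d ⬝ᵥ d ≠ 0 := fun h => hdne (dotProduct_self_eq_zero.mp h)
    have h2 : 0 ≤ d ⬝ᵥ d := Finset.sum_nonneg fun i _ => mul_self_nonneg _
    exact lt_of_le_of_ne h2 (Ne.symm h1)
  have hdnorm : 0 < ‖d‖ := norm_pos_iff.mpr hdne
  obtain ⟨ε, hε, hball⟩ := Metric.isOpen_iff.mp isOpen_interior v hint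
  set t : ℝ := ε / (2 * ‖d‖) with ht
  have htpos : 0 < t := by positivity
  set v' : Fin n → ℝ := v + t • d with hv'
  have hv'mem : v' ∈ subdiff n φ (cz m) := by
    apply interior_subset
    apply hball
    rw [Metric.mem_ball, dist_eq_norm]
    have : v' - v = t • d := by rw [hv']; abel
    rw [this, norm_smul, Real.norm_eq_abs, abs_of_pos htpos, ht]
    rw [div_mul_eq_mul_div, mul_comm (2 : ℝ) ‖d‖, ← div_div, mul_div_assoc,
      div_self hdnorm.ne', mul_one]
    linarith
  have h1 := hv'mem y
  have h2 := hv (cz m)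
  have e1 : v' ⬝ᵥ (y - cz m) = v ⬝ᵥ d + t * (d ⬝ᵥ d) := by
    rw [← hd, hv', add_dotProduct, smul_dotProduct, smul_eq_mul]
  have e2 : v ⬝ᵥ (cz m - y) = -(v ⬝ᵥ d) := by
    rw [show cz m - y = -d by rw [hd]; abel, dotProduct_neg]
  rw [e1] at h1
  rw [e2] at h2
  nlinarith

end more

end Stmt13Aux

open Stmt13Aux

/-- with `φ` the lower convex hull of `{(m, mᵀZm/2) : m ∈ ℤⁿ}`, for any `k > 0`
the common volume `V = Vol(∂φ(m))` satisfies `kⁿ·V = Vol(D)` with `D` a fundamental domain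
for the lattice `{Z(γ,·) : γ ∈ kℤⁿ}`, `Vol(D) = kⁿ·det Z`, hence `V = det Z` and
`MA(φ) = det(Z)·Σ_{m∈ℤⁿ} δ_m`. -/
theorem stmt_13 (n : ℕ) (Z : Matrix (Fin n) (Fin n) ℝ)
    (hsymm : Z.IsSymm) (hpos : Z.PosDef)
    (hint : ∀ i j, ∃ z : ℤ, Z i j = (z : ℝ))
    (φ : (Fin n → ℝ) → ℝ)
    (hφ : ∀ y : Fin n → ℝ, IsLUB
      {r : ℝ | ∃ (v : Fin n → ℝ) (c : ℝ),
        (∀ m : Fin n → ℤ, v ⬝ᵥ (fun i => (m i : ℝ)) + c ≤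
          (fun i => (m i : ℝ)) ⬝ᵥ Z.mulVec (fun i => (m i : ℝ)) / 2)
        ∧ r = v ⬝ᵥ y + c} (φ y)) :
    (∀ (k : ℕ), 0 < k → ∀ m : Fin n → ℤ,
      (k : ℝ≥0∞) ^ n * volume (subdiff n φ (fun i => (m i : ℝ))) = volume (fundDom n k Z))
    ∧ (∀ (k : ℕ), 0 < k →
      volume (fundDom n k Z) = ENNReal.ofReal ((k : ℝ) ^ n * Z.det))
    ∧ (∀ m : Fin n → ℤ,
      volume (subdiff n φ (fun i => (m i : ℝ))) = ENNReal.ofReal Z.det)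
    ∧ (∀ E : Set (Fin n → ℝ), MeasurableSet E →
      volume (⋃ y ∈ E, subdiff n φ y)
        = ∑' m : Fin n → ℤ,
            E.indicator (fun _ => ENNReal.ofReal Z.det) (fun i => (m i : ℝ))) := by
  -- the subdifferential at a lattice point is a translate of `P Z`
  have hsd : ∀ m : Fin n → ℤ,
      subdiff n φ (fun i => (m i : ℝ)) = {v | v - Z.mulVec (cz m) ∈ P Z} := by
    intro m
    have := subdiff_eq Z φ hφ hsymm hpos m
    exact this
  have hsdvol : ∀ m : Fin n → ℤ,
      volume (subdiff n φ (fun i => (m i : ℝ))) = ENNReal.ofReal Z.det := by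
    intro m
    rw [hsd m, volume_tile Z hsymm hpos]
  -- volume of the fundamental domain
  have hfd : ∀ (k : ℕ), 0 < k →
      volume (fundDom n k Z) = ENNReal.ofReal ((k : ℝ) ^ n * Z.det) := by
    intro k hk
    have hL : (fun t : Fin n → ℝ => ∑ i, t i • ((k : ℝ) • Z.mulVec (Pi.single i 1)))
        = fun t => Matrix.toLin' ((k : ℝ) • Z) t := by
      funext t
      rw [Matrix.toLin'_apply, Matrix.smul_mulVec, mulVec_sum_single Z t,
        Finset.smul_sum]
      exact Finset.sum_congr rfl fun i _ => (smul_comm _ _ _)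
    have hbox : volume (Set.univ.pi fun _ : Fin n => Set.Icc (0 : ℝ) 1) = 1 := by
      rw [volume_pi_pi]
      simp [Real.volume_Icc]
    have himg := Measure.addHaar_image_linearMap (μ := volume) (Matrix.toLin' ((k : ℝ) • Z))
      (Set.univ.pi fun _ : Fin n => Set.Icc (0 : ℝ) 1)
    rw [fundDom, hL]
    rw [show (fun t => Matrix.toLin' ((k : ℝ) • Z) t) = ⇑(Matrix.toLin' ((k : ℝ) • Z))
      from rfl]
    rw [himg, hbox, mul_one, LinearMap.det_toLin', Matrix.det_smul, Fintype.card_fin]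
    
    congr 1
    rw [abs_of_nonneg]
    have := hpos.det_pos
    positivity
  refine ⟨?_, hfd, hsdvol, ?_⟩
  · intro k hk m
    rw [hsdvol m, hfd k hk]
    rw [ENNReal.ofReal_mul (by positivity)]
    congr 1
    rw [← ENNReal.ofReal_natCast k, ← ENNReal.ofReal_pow (by positivity)]
  · intro E hE
    classical
    set c : ℝ≥0∞ := ENNReal.ofReal Z.det with hc
    set tile : (Fin n → ℤ) → Set (Fin n → ℝ) :=
      fun m => {v | v - Z.mulVec (cz m) ∈ P Z} with htile
    have hsd' : ∀ m : Fin n → ℤ, subdiff n φ (cz m) = tile m := fun m => hsd m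
    have htile_disj : ∀ γ γ' : Fin n → ℤ, γ ≠ γ' →
        volume (tile γ ∩ tile γ') = 0 := by
      intro γ γ' hne
      refine measure_mono_null (overlap_subset Z hsymm γ γ') ?_
      exact hyperplane_null _ (cz_ne_zero (sub_ne_zero_of_ne (fun h => hne h.symm))) _
    set U : Set (Fin n → ℝ) := ⋃ m : {m : Fin n → ℤ // cz m ∈ E}, tile m.1 with hU
    set N : Set (Fin n → ℝ) := ⋃ m : Fin n → ℤ, frontier (tile m) with hN
    have hNnull : volume N = 0 :=
      measure_iUnion_null fun m => Convex.addHaar_frontier volume (tile_convex Z _)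
    have hsub1 : (⋃ y ∈ E, subdiff n φ y) ⊆ U ∪ N := by
      intro v hv
      rw [Set.mem_iUnion₂] at hv
      obtain ⟨y, hy, hvy⟩ := hv
      obtain ⟨m₀, hm₀⟩ := exists_tile Z hsymm hpos v
      have hm₀' : v ∈ tile m₀ := hm₀
      by_cases hi : v ∈ interior (tile m₀)
      · have hy' : y = cz m₀ := by
          refine interior_unique φ m₀ hvy ?_
          rw [hsd' m₀]
          exact hi
        left
        rw [hU, Set.mem_iUnion]
        exact ⟨⟨m₀, hy' ▸ hy⟩, hm₀'⟩
      · right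
        rw [hN, Set.mem_iUnion]
        refine ⟨m₀, ?_⟩
        rw [(tile_closed Z _).frontier_eq]
        exact ⟨hm₀', hi⟩
    have hsub2 : U ⊆ ⋃ y ∈ E, subdiff n φ y := by
      intro v hv
      rw [hU, Set.mem_iUnion] at hv
      obtain ⟨⟨m, hm⟩, hvm⟩ := hv
      rw [Set.mem_iUnion₂]
      refine ⟨cz m, hm, ?_⟩
      rw [hsd' m]
      exact hvm
    have hUvol : volume U = ∑' m : {m : Fin n → ℤ // cz m ∈ E}, c := by
      rw [hU, measure_iUnion₀]
      · exact tsum_congr fun m => volume_tile Z hsymm hpos _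
      · intro i j hij
        exact htile_disj _ _ (fun h => hij (Subtype.ext h))
      · exact fun i => ((tile_closed Z _).measurableSet).nullMeasurableSet
    have hmain : volume (⋃ y ∈ E, subdiff n φ y) = volume U := by
      apply le_antisymm
      · calc volume (⋃ y ∈ E, subdiff n φ y) ≤ volume (U ∪ N) := measure_mono hsub1
          _ ≤ volume U + volume N := measure_union_le _ _
          _ = volume U := by rw [hNnull, add_zero]
      · exact measure_mono hsub2
    rw [hmain, hUvol]
    have hts := tsum_subtype {m : Fin n → ℤ | cz m ∈ E} (fun _ => c)
    rw [show ∑' m : {m : Fin n → ℤ // cz m ∈ E}, c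
        = ∑' m : {m : Fin n → ℤ | cz m ∈ E}, c from rfl, hts]
    refine tsum_congr fun m => ?_
    have hrfl : E.indicator (fun _ => ENNReal.ofReal Z.det) (fun i => ((m i : ℝ)))
        = E.indicator (fun _ => c) (cz m) := rfl
    rw [hrfl]
    by_cases hm : cz m ∈ E
    · rw [Set.indicator_of_mem hm, Set.indicator_of_mem (by exact hm)]
    · rw [Set.indicator_of_notMem hm, Set.indicator_of_notMem (by exact hm)]
end
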